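/- arXiv:2405.07345 — 2 statements merged into one kernel-verified Lean document; each statement's English description precedes it below -/
import Mathlib

section
/- Let E be the edge set of a graph G, let P be a probability measure on {0,1}^E (with the product σ-algebra), and let k ≥ 0. Then the following are equivalent: (i) P is positively associated and k-independent; (ii) for every F ⊆ E, every F-increasing event A supported on F, and every cl_k(F)-increasing event B, one has P[A ∩ B] ≥ P[A]·P[B]. -/
open MeasureTheory Filter
open scoped ENNReal Classical

noncomputable section

namespace PercFormal

/-! ### Generic percolation configurations on an index type `ι` -/

variable {ι : Type*} {V : Type*}

/-- An event is increasing if it is closed under pointwise enlargement of the configuration. -/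
def IncreasingEvent (A : Set (ι → Bool)) : Prop :=
  ∀ ⦃ω ω' : ι → Bool⦄, ω ∈ A → ω ≤ ω' → ω' ∈ A

/-- Positive association (FKG): increasing events are positively correlated. -/
def PositivelyAssociated (P : Measure (ι → Bool)) : Prop :=
  ∀ A B : Set (ι → Bool), MeasurableSet A → MeasurableSet B →
    IncreasingEvent A → IncreasingEvent B → P A * P B ≤ P (A ∩ B)

/-- An event is supported on `F` if it is measurable and depends only on coordinates in `F`. -/
def SupportedOn (A : Set (ι → Bool)) (F : Set ι) : Prop :=
  MeasurableSet A ∧ ∀ ⦃ω ω' : ι → Bool⦄, (∀ e ∈ F, ω e = ω' e) → ω ∈ A → ω' ∈ A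

/-- The coordinates in `F₁` are independent of the coordinates in `F₂` under `P`. -/
def IndepOn (P : Measure (ι → Bool)) (F₁ F₂ : Set ι) : Prop :=
  ∀ A B : Set (ι → Bool), SupportedOn A F₁ → SupportedOn B F₂ → P (A ∩ B) = P A * P B

/-- `P` is the product (i.i.d.) Bernoulli measure with parameter `p`: a probability measure
with marginals `p` under which disjoint coordinate sets are independent. -/
def IsProductBernoulli (P : Measure (ι → Bool)) (p : ℝ) : Prop :=
  IsProbabilityMeasure P ∧ (∀ i : ι, P {ω | ω i = true} = ENNReal.ofReal p) ∧
    ∀ F₁ F₂ : Set ι, Disjoint F₁ F₂ → IndepOn P F₁ F₂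

/-- Stochastic domination `μ ≪ ν` for measures on `{0,1}^ι`. -/
def StochDom (μ ν : Measure (ι → Bool)) : Prop :=
  ∀ A : Set (ι → Bool), MeasurableSet A → IncreasingEvent A → μ A ≤ ν A

/-- `A` is an `F`-increasing event: raising coordinates inside `F` (while keeping
the configuration unchanged outside `F`) preserves membership in `A`. -/
def FIncreasing (F : Set ι) (A : Set (ι → Bool)) : Prop :=
  ∀ ⦃ω ω' : ι → Bool⦄, ω ∈ A → (∀ e ∈ F, ω e ≤ ω' e) → (∀ e, e ∉ F → ω e = ω' e) → ω' ∈ A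

/-! ### Bond percolation on undirected simple graphs -/

/-- Two sets of edges are at graph distance at least `k`: every walk between an endpoint of
an edge of `F₁` and an endpoint of an edge of `F₂` has length at least `k`. -/
def edgeDistGE (G : SimpleGraph V) (k : ℕ) (F₁ F₂ : Set G.edgeSet) : Prop :=
  ∀ e₁ ∈ F₁, ∀ e₂ ∈ F₂, ∀ u v : V, u ∈ (e₁ : Sym2 V) → v ∈ (e₂ : Sym2 V) →
    ∀ w : G.Walk u v, k ≤ w.length

/-- `k`-independence: edge statuses on disjoint edge sets at distance at least `k`
are independent. -/
def KIndependent (G : SimpleGraph V) (P : Measure (G.edgeSet → Bool)) (k : ℕ) : Prop :=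
  ∀ F₁ F₂ : Set G.edgeSet, Disjoint F₁ F₂ → edgeDistGE G k F₁ F₂ → IndepOn P F₁ F₂

/-- `u` and `v` are joined by an open edge in the configuration `ω`. -/
def openAdj (G : SimpleGraph V) (ω : G.edgeSet → Bool) (u v : V) : Prop :=
  ∃ h : G.Adj u v, ω ⟨s(u, v), (G.mem_edgeSet).mpr h⟩ = true

/-- The open cluster of a vertex `v`. -/
def cluster (G : SimpleGraph V) (ω : G.edgeSet → Bool) (v : V) : Set V :=
  {u | Relation.ReflTransGen (openAdj G ω) v u}

/-- `P` percolates: with positive probability there is an infinite open cluster. -/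
def Percolates (G : SimpleGraph V) (P : Measure (G.edgeSet → Bool)) : Prop :=
  0 < P {ω | ∃ v : V, (cluster G ω v).Infinite}

/-- `P` belongs to the class `𝒫ₐ(G,p)`: a positively associated, `1`-independent bond
percolation model with all marginals at least `p`. -/
def ClassPA (G : SimpleGraph V) (p : ℝ) (P : Measure (G.edgeSet → Bool)) : Prop :=
  IsProbabilityMeasure P ∧ PositivelyAssociated P ∧ KIndependent G P 1 ∧
    ∀ e : G.edgeSet, ENNReal.ofReal p ≤ P {ω | ω e = true}

/-- `p_a⁺(G)`. -/
def pAPlus (G : SimpleGraph V) : ℝ :=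
  sSup {p : ℝ | p ∈ Set.Icc 0 1 ∧
    ∃ P : Measure (G.edgeSet → Bool), ClassPA G p P ∧ ¬ Percolates G P}

/-- The critical probability of Bernoulli bond percolation on `G`. -/
def pC (G : SimpleGraph V) : ℝ :=
  sSup {p : ℝ | p ∈ Set.Icc 0 1 ∧
    ∃ P : Measure (G.edgeSet → Bool), IsProductBernoulli P p ∧ ¬ Percolates G P}

/-- `p⁻(G)`: below this value, no `1`-independent model with marginals `p` percolates. -/
def pMinus (G : SimpleGraph V) : ℝ :=
  sSup {q : ℝ | q ∈ Set.Icc 0 1 ∧ ∀ p : ℝ, 0 ≤ p → p < q →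
    ∀ P : Measure (G.edgeSet → Bool), IsProbabilityMeasure P → KIndependent G P 1 →
      (∀ e : G.edgeSet, P {ω | ω e = true} = ENNReal.ofReal p) → ¬ Percolates G P}

/-- `p_a⁻(G)`: the analogue of `p⁻(G)` for positively associated models. -/
def pAMinus (G : SimpleGraph V) : ℝ :=
  sSup {q : ℝ | q ∈ Set.Icc 0 1 ∧ ∀ p : ℝ, 0 ≤ p → p < q →
    ∀ P : Measure (G.edgeSet → Bool), IsProbabilityMeasure P → PositivelyAssociated P →
      KIndependent G P 1 →
      (∀ e : G.edgeSet, P {ω | ω e = true} = ENNReal.ofReal p) → ¬ Percolates G P}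

/-! ### Site percolation on undirected graphs -/

/-- One open step of site percolation: `u` and `v` adjacent and both open. -/
def siteAdjOpen (G : SimpleGraph V) (σ : V → Bool) (u v : V) : Prop :=
  G.Adj u v ∧ σ u = true ∧ σ v = true

/-- A site percolation model percolates if with positive probability there is an infinite
connected set of open vertices. -/
def PercolatesSite (G : SimpleGraph V) (P : Measure (V → Bool)) : Prop :=
  0 < P {σ | ∃ v : V, σ v = true ∧ {u | Relation.ReflTransGen (siteAdjOpen G σ) v u}.Infinite}

/-- The critical probability of Bernoulli site percolation on `G`. -/
def pCSite (G : SimpleGraph V) : ℝ :=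
  sSup {p : ℝ | p ∈ Set.Icc 0 1 ∧
    ∃ P : Measure (V → Bool), IsProductBernoulli P p ∧ ¬ PercolatesSite G P}

/-! ### Branching number of a tree -/

/-- A unit flow on `G` from the root `o` (children of `v` = neighbours one step further
from the root). -/
def IsUnitFlow (G : SimpleGraph V) (o : V) (θ : V → ℝ≥0∞) : Prop :=
  θ o = 1 ∧ ∀ v : V,
    θ v = ∑' w : {w : V // G.Adj v w ∧ G.dist o w = G.dist o v + 1}, θ w.1

/-- The branching number `br(T)` of a rooted tree, via unit flows. -/
def branchingNumber (G : SimpleGraph V) (o : V) : ℝ≥0∞ :=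
  ⨆ (θ : V → ℝ≥0∞) (_ : IsUnitFlow G o θ),
    Filter.liminf (fun v : V => θ v ^ (-(1 : ℝ) / (G.dist o v : ℝ)))
      (Filter.comap (fun v : V => G.dist o v) Filter.atTop)

/-! ### Bond percolation on directed graphs -/

/-- The directed edges of the directed graph given by the relation `D`. -/
abbrev DirEdge (D : V → V → Prop) : Type _ := {e : V × V // D e.1 e.2}

/-- One open directed step. -/
def dirOpenRel (D : V → V → Prop) (ω : DirEdge D → Bool) (u v : V) : Prop :=
  ∃ h : D u v, ω ⟨(u, v), h⟩ = true

/-- The set of vertices reachable from `U` by directed open paths. -/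
def dirClusterSet (D : V → V → Prop) (ω : DirEdge D → Bool) (U : Set V) : Set V :=
  {v | ∃ u ∈ U, Relation.ReflTransGen (dirOpenRel D ω) u v}

/-- A directed bond percolation model percolates if with positive probability some directed
cluster is infinite. -/
def PercolatesDir (D : V → V → Prop) (P : Measure (DirEdge D → Bool)) : Prop :=
  0 < P {ω | ∃ v : V, (dirClusterSet D ω {v}).Infinite}

/-- Two sets of directed edges are at distance at least `1` in the underlying undirected
graph, i.e. they share no endpoint. -/
def dirEdgeDistGE1 (D : V → V → Prop) (F₁ F₂ : Set (DirEdge D)) : Prop :=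
  ∀ e₁ ∈ F₁, ∀ e₂ ∈ F₂,
    e₁.1.1 ≠ e₂.1.1 ∧ e₁.1.1 ≠ e₂.1.2 ∧ e₁.1.2 ≠ e₂.1.1 ∧ e₁.1.2 ≠ e₂.1.2

/-- `1`-independence for directed bond percolation models. -/
def OneIndependentDir (D : V → V → Prop) (P : Measure (DirEdge D → Bool)) : Prop :=
  ∀ F₁ F₂ : Set (DirEdge D), dirEdgeDistGE1 D F₁ F₂ → IndepOn P F₁ F₂

/-- The class `𝒫ₐ(G,p)` for directed graphs. -/
def ClassPADir (D : V → V → Prop) (p : ℝ) (P : Measure (DirEdge D → Bool)) : Prop :=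
  IsProbabilityMeasure P ∧ PositivelyAssociated P ∧ OneIndependentDir D P ∧
    ∀ e : DirEdge D, ENNReal.ofReal p ≤ P {ω | ω e = true}

/-- `p_a⁺(G)` for directed graphs. -/
def pAPlusDir (D : V → V → Prop) : ℝ :=
  sSup {p : ℝ | p ∈ Set.Icc 0 1 ∧
    ∃ P : Measure (DirEdge D → Bool), ClassPADir D p P ∧ ¬ PercolatesDir D P}

/-! ### Site percolation on directed graphs -/

/-- One open directed step of site percolation. -/
def dirSiteOpenRel (D : V → V → Prop) (σ : V → Bool) (u v : V) : Prop :=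
  D u v ∧ σ u = true ∧ σ v = true

/-- A directed site percolation model percolates if with positive probability some vertex
reaches infinitely many vertices by directed open paths. -/
def PercolatesSiteDir (D : V → V → Prop) (P : Measure (V → Bool)) : Prop :=
  0 < P {σ | ∃ v : V, {u | Relation.ReflTransGen (dirSiteOpenRel D σ) v u}.Infinite}

/-- The critical probability of Bernoulli site percolation on a directed graph. -/
def pCSiteDir (D : V → V → Prop) : ℝ :=
  sSup {p : ℝ | p ∈ Set.Icc 0 1 ∧
    ∃ P : Measure (V → Bool), IsProductBernoulli P p ∧ ¬ PercolatesSiteDir D P}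

/-! ### The lattices `ℤⁿ`, `ℤ⃗ⁿ`, `ℤ²`, `ℤ⃗²` and the truncated square lattice -/

/-- The directed nearest-neighbour relation on `ℤⁿ`: increase one coordinate by `1`. -/
def dirAdjN (n : ℕ) (x y : Fin n → ℤ) : Prop :=
  ∃ i, y i = x i + 1 ∧ ∀ j, j ≠ i → y j = x j

/-- The hypercubic lattice `ℤⁿ`. -/
def ZLat (n : ℕ) : SimpleGraph (Fin n → ℤ) := SimpleGraph.fromRel (dirAdjN n)

/-- The directed nearest-neighbour relation on `ℤ²`. -/
def dirAdj2 (u v : ℤ × ℤ) : Prop :=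
  v = (u.1 + 1, u.2) ∨ v = (u.1, u.2 + 1)

/-- The square lattice `ℤ²`. -/
def Z2 : SimpleGraph (ℤ × ℤ) := SimpleGraph.fromRel dirAdj2

/-- Adjacency generating the truncated square lattice `(4,8,8)`: each vertex of `ℤ²` is
replaced by a 4-cycle (directions `0 = east, 1 = north, 2 = west, 3 = south`), and
east/north vertices are joined to the west/south vertices of the neighbouring squares. -/
def truncAdj (a b : (ℤ × ℤ) × Fin 4) : Prop :=
  (a.1 = b.1 ∧ b.2 = a.2 + 1) ∨
  (a.2 = 0 ∧ b.2 = 2 ∧ b.1 = (a.1.1 + 1, a.1.2)) ∨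
  (a.2 = 1 ∧ b.2 = 3 ∧ b.1 = (a.1.1, a.1.2 + 1))

/-- The truncated square lattice `𝕋`. -/
def TruncSq : SimpleGraph ((ℤ × ℤ) × Fin 4) := SimpleGraph.fromRel truncAdj

/-! ### Strict level structures and levelwise independent versions -/

/-- A strict level structure: a partition of the vertices into levels such that every
directed edge goes from some level `i` to level `i+1`. -/
def IsStrictLevelStructure (D : V → V → Prop) (L : ℤ → Set V) : Prop :=
  (∀ v : V, ∃! i : ℤ, v ∈ L i) ∧ ∀ u v : V, D u v → ∀ i : ℤ, u ∈ L i → v ∈ L (i + 1)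

/-- The edges from level `i-1` to level `i`. -/
def levelEdges (D : V → V → Prop) (L : ℤ → Set V) (i : ℤ) : Set (DirEdge D) :=
  {e | e.1.1 ∈ L (i - 1) ∧ e.1.2 ∈ L i}

/-- `Q` is the levelwise independent version of `P` (w.r.t. the level structure `L`):
it has the same law as `P` on each level of edges, and the levels are independent. -/
def IsLevelwiseVersion (D : V → V → Prop) (L : ℤ → Set V)
    (P Q : Measure (DirEdge D → Bool)) : Prop :=
  IsProbabilityMeasure Q ∧
  (∀ (i : ℤ) (A : Set (DirEdge D → Bool)), SupportedOn A (levelEdges D L i) → Q A = P A) ∧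
  (∀ (s : Finset ℤ) (A : ℤ → Set (DirEdge D → Bool)),
      (∀ i ∈ s, SupportedOn (A i) (levelEdges D L i)) →
      Q (⋂ i ∈ s, A i) = ∏ i ∈ s, Q (A i))

/-- The diagonal levels of `ℤ²`. -/
def levelZ2 (i : ℤ) : Set (ℤ × ℤ) := {v | v.1 + v.2 = i}

/-! ### The comparison Markov chain `(𝒳_i)` on `ℤ⃗²` -/

instance : MeasurableSpace (Finset (ℤ × ℤ)) := ⊤

/-- The two outward steps in `ℤ⃗²`. -/
def out1 (v : ℤ × ℤ) : ℤ × ℤ := (v.1 + 1, v.2)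

def out2 (v : ℤ × ℤ) : ℤ × ℤ := (v.1, v.2 + 1)

/-- Candidate out-neighbours (out-neighbourhood in the full lattice `ℤ⃗²`). -/
def outCand (W : Finset (ℤ × ℤ)) : Finset (ℤ × ℤ) := W.image out1 ∪ W.image out2

/-- The out-neighbourhood `N₊(W)` of `W` in the subgraph of `ℤ⃗²` given by `D`. -/
def NplusF (D : ℤ × ℤ → ℤ × ℤ → Prop) (W : Finset (ℤ × ℤ)) : Finset (ℤ × ℤ) :=
  (outCand W).filter (fun v => ∃ u ∈ W, D u v)

/-- The maximal interval (run) of `W` containing `u`: all `v ∈ W` on the same diagonal as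
`u` such that every lattice point between `u` and `v` on that diagonal lies in `W`. -/
def run (W : Finset (ℤ × ℤ)) (u : ℤ × ℤ) : Finset (ℤ × ℤ) :=
  W.filter (fun v => v.1 + v.2 = u.1 + u.2 ∧
    ∀ x : ℤ, min u.1 v.1 ≤ x → x ≤ max u.1 v.1 → (x, u.1 + u.2 - x) ∈ W)

/-- The rightmost element of the (full) out-neighbourhood of an interval `R`, as a
singleton finset; for an interval `{(x+j,y−j) : 1 ≤ j ≤ ℓ}` this is `{(x+ℓ+1, y−ℓ)}`. -/
def rightmostOut (R : Finset (ℤ × ℤ)) : Finset (ℤ × ℤ) :=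
  (outCand R).filter (fun v => ∀ w ∈ outCand R, w.1 ≤ v.1)

/-- The transition weight of a single maximal interval `R` to `S ⊆ N₊(R)`. -/
def intervalWeight (D : ℤ × ℤ → ℤ × ℤ → Prop) (p : ℝ) (R S : Finset (ℤ × ℤ)) : ℝ :=
  if (NplusF D R).card = R.card + 1 then
    if S = ∅ then (1 - p) ^ R.card
    else if S = rightmostOut R then 0
    else p ^ S.card * (1 - p) ^ ((NplusF D R).card - S.card)
  else p ^ S.card * (1 - p) ^ ((NplusF D R).card - S.card)

/-- The transition probability `p_X(W, W')` of the Markov chain `(𝒳_i)`. -/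
def pX (D : ℤ × ℤ → ℤ × ℤ → Prop) (p : ℝ) (W W' : Finset (ℤ × ℤ)) : ℝ :=
  if W' ⊆ NplusF D W then
    ∏ R ∈ W.image (run W), intervalWeight D p R (NplusF D R ∩ W')
  else 0

/-- `ν` is the law of the Markov chain `(𝒳_i)_{i ≥ 0}` with initial state `U` and
transition probability `p_X` (with parameter `p`). -/
def IsChainLaw (D : ℤ × ℤ → ℤ × ℤ → Prop) (p : ℝ) (U : Finset (ℤ × ℤ))
    (ν : Measure (ℕ → Finset (ℤ × ℤ))) : Prop :=
  IsProbabilityMeasure ν ∧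
  ∀ (n : ℕ) (W : ℕ → Finset (ℤ × ℤ)),
    ν {X | ∀ j ≤ n, X j = W j} =
      (if W 0 = U then 1 else 0) *
        ENNReal.ofReal (∏ j ∈ Finset.range n, pX D p (W j) (W (j + 1)))

/-- `π` is the model `π_{p,p}` on `ℤ⃗²`: the edge `(u,v)` is open iff `Z⁺(u) = Z⁻(v) = 1`,
where all `Z⁺(w), Z⁻(w)` are i.i.d. Bernoulli(`p`). -/
def IsPiPP (p : ℝ) (π : Measure (DirEdge dirAdj2 → Bool)) : Prop :=
  ∃ ν : Measure ((ℤ × ℤ) ⊕ (ℤ × ℤ) → Bool), IsProductBernoulli ν p ∧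
    π = ν.map (fun Z (e : DirEdge dirAdj2) => Z (Sum.inl e.1.1) && Z (Sum.inr e.1.2))

end PercFormal

namespace PercFormal

/-- The `k`-closure `cl_k(F)` of a set of edges: for `k ≥ 1`, all edges at distance
less than `k` from `F`; for `k = 0`, `F` itself. -/
def clk {V : Type*} (G : SimpleGraph V) (k : ℕ) (F : Set G.edgeSet) : Set G.edgeSet :=
  if k = 0 then F
  else {e | ∃ f ∈ F, ∃ u v : V, u ∈ (e : Sym2 V) ∧ v ∈ (f : Sym2 V) ∧
    ∃ w : G.Walk u v, w.length < k}

end PercFormal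

open Topology

namespace PercFormal
namespace Stmt8

variable {ι : Type*}

/-- `B` is determined by the coordinates in `M`. -/
def DetBy (M : Set ι) (B : Set (ι → Bool)) : Prop :=
  ∀ ⦃x y : ι → Bool⦄, (∀ e ∈ M, x e = y e) → x ∈ B → y ∈ B

theorem DetBy.mono {M M' : Set ι} {B : Set (ι → Bool)} (h : M ⊆ M') (hB : DetBy M B) :
    DetBy M' B := fun x y hxy hx => hB (fun e he => hxy e (h he)) hx

/-- a set determined by finitely many coordinates is measurable. -/
theorem DetBy.measurableSet {s : Finset ι} {B : Set (ι → Bool)} (hB : DetBy (↑s) B) :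
    MeasurableSet B := by
  classical
  have hrepr : B = ⋃ (p : (↑s : Finset ι) → Bool)
      (_ : (fun e => if h : e ∈ s then p ⟨e, h⟩ else false) ∈ B),
      {x : ι → Bool | ∀ i : (↑s : Finset ι), x i = p i} := by
    ext x
    constructor
    · intro hx
      refine Set.mem_iUnion.2 ⟨fun i => x i, Set.mem_iUnion.2 ⟨?_, fun i => rfl⟩⟩
      exact hB (fun e he => by simp [Finset.mem_coe.1 he]) hx
    · intro hx
      rcases Set.mem_iUnion.1 hx with ⟨p, hp⟩
      rcases Set.mem_iUnion.1 hp with ⟨hpB, hxp⟩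
      refine hB (fun e he => ?_) hpB
      have he' : e ∈ s := Finset.mem_coe.1 he
      simp only [he', dif_pos]
      exact (hxp ⟨e, he'⟩).symm
  rw [hrepr]
  refine MeasurableSet.iUnion fun p => MeasurableSet.iUnion fun _ => ?_
  have : {x : ι → Bool | ∀ i : (↑s : Finset ι), x i = p i}
      = ⋂ i : (↑s : Finset ι), {x : ι → Bool | x i = p i} := by
    ext x; simp [Set.mem_iInter]
  rw [this]
  refine MeasurableSet.iInter fun i => ?_
  exact measurableSet_eq_fun (measurable_pi_apply (i : ι)) measurable_const

theorem increasing_of_detBy {S W : Set ι} {B : Set (ι → Bool)} (hWS : W ⊆ S)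
    (hdet : DetBy W B) (hF : FIncreasing S B) : IncreasingEvent B := by
  intro x y hx hxy
  have hz : (fun e => if e ∈ S then y e else x e) ∈ B := by
    refine hF hx (fun e he => ?_) (fun e he => ?_)
    · simp only [he, if_pos]; exact hxy e
    · rw [if_neg he]
  exact hdet (fun e he => by simp [hWS he]) hz

end Stmt8
end PercFormal

namespace PercFormal
namespace Stmt8

variable {ι : Type*}

/-- all-true cylinder on a finset. -/
def Cp (N : Finset ι) : Set (ι → Bool) := {x | ∀ e ∈ N, x e = true}

/-- all-false cylinder on a finset. -/
def Cm (N : Finset ι) : Set (ι → Bool) := {x | ∀ e ∈ N, x e = false}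

theorem detBy_Cp (N : Finset ι) : DetBy (↑N) (Cp N) :=
  fun x y hxy hx e he => (hxy e (Finset.mem_coe.2 he)).symm.trans (hx e he)

theorem detBy_Cm (N : Finset ι) : DetBy (↑N) (Cm N) :=
  fun x y hxy hx e he => (hxy e (Finset.mem_coe.2 he)).symm.trans (hx e he)

theorem measurableSet_Cp (N : Finset ι) : MeasurableSet (Cp N) := (detBy_Cp N).measurableSet

theorem measurableSet_Cm (N : Finset ι) : MeasurableSet (Cm N) := (detBy_Cm N).measurableSet

theorem increasing_Cp (N : Finset ι) : IncreasingEvent (Cp N) := by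
  intro x y hx hxy e he
  have := hxy e
  rw [hx e he] at this
  exact le_antisymm (Bool.le_true _) this

theorem increasing_compl_Cm (N : Finset ι) : IncreasingEvent (Cm N)ᶜ := by
  intro x y hx hxy hy
  refine hx fun e he => ?_
  have := hxy e
  rw [hy e he] at this
  exact le_antisymm this (Bool.false_le _)

theorem increasing_inter {V W : Set (ι → Bool)} (hV : IncreasingEvent V)
    (hW : IncreasingEvent W) : IncreasingEvent (V ∩ W) :=
  fun _ _ hx hxy => ⟨hV hx.1 hxy, hW hx.2 hxy⟩

theorem increasing_union {V W : Set (ι → Bool)} (hV : IncreasingEvent V)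
    (hW : IncreasingEvent W) : IncreasingEvent (V ∪ W) := by
  rintro x y (hx | hx) hxy
  · exact Or.inl (hV hx hxy)
  · exact Or.inr (hW hx hxy)


theorem ennreal_cancel_right {a b c : ℝ≥0∞} (hc : c ≠ ∞) (h : a + c ≤ b + c) : a ≤ b :=
  (ENNReal.add_le_add_iff_right hc).1 h

section Core

variable (P : Measure (ι → Bool)) [IsProbabilityMeasure P] (S : Set ι)
  (A : Set (ι → Bool))

/-- FKG-type hypothesis. -/
def HypFKG : Prop := ∀ V : Set (ι → Bool), MeasurableSet V → IncreasingEvent V →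
  P A * P V ≤ P (A ∩ V)

/-- Independence from the far region. -/
def HypIND : Prop := ∀ C : Set (ι → Bool), MeasurableSet C → DetBy Sᶜ C →
  P (A ∩ C) = P A * P C

variable {P S A}

theorem decrFKG (hFKG : HypFKG P A) {D : Set (ι → Bool)} (hD : MeasurableSet D)
    (hDc : IncreasingEvent Dᶜ) : P (A ∩ D) ≤ P A * P D := by
  have h1 : P A * P Dᶜ ≤ P (A ∩ Dᶜ) := hFKG Dᶜ hD.compl hDc
  have h2 : P (A ∩ D) + P (A ∩ Dᶜ) = P A := by
    have := measure_inter_add_diff (μ := P) A hD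
    rwa [Set.diff_eq] at this
  have h3 : P D + P Dᶜ = 1 := prob_add_prob_compl (μ := P) hD
  have key : P (A ∩ D) + P A * P Dᶜ ≤ P A * P D + P A * P Dᶜ := by
    calc P (A ∩ D) + P A * P Dᶜ ≤ P (A ∩ D) + P (A ∩ Dᶜ) := by gcongr
    _ = P A := h2
    _ = P A * (P D + P Dᶜ) := by rw [h3, mul_one]
    _ = P A * P D + P A * P Dᶜ := by rw [mul_add]
  exact ennreal_cancel_right (ENNReal.mul_ne_top (measure_ne_top P A) (measure_ne_top P Dᶜ)) key
  
theorem core (hFKG : HypFKG P A) (hIND : HypIND P S A)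
    {V C : Set (ι → Bool)} (hVm : MeasurableSet V) (hVi : IncreasingEvent V)
    (hCm : MeasurableSet C) (hCdet : DetBy Sᶜ C) (hCd : IncreasingEvent Cᶜ) :
    P A * P (V ∩ C) ≤ P (A ∩ (V ∩ C)) := by
  have hAC : P (A ∩ C) = P A * P C := hIND C hCm hCdet
  have hsplit1 : P (A ∩ C ∩ V) + P ((A ∩ C) \ V) = P (A ∩ C) :=
    measure_inter_add_diff _ hVm
  have hsplit2 : P (C ∩ V) + P (C \ V) = P C := measure_inter_add_diff _ hVm
  have hD : P (A ∩ (C ∩ Vᶜ)) ≤ P A * P (C ∩ Vᶜ) := by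
    refine decrFKG hFKG (hCm.inter hVm.compl) ?_
    rw [Set.compl_inter, compl_compl]
    exact increasing_union hCd hVi
  have hkey : P A * P (C ∩ V) + P A * P (C ∩ Vᶜ) ≤ P (A ∩ C ∩ V) + P A * P (C ∩ Vᶜ) := by
    calc P A * P (C ∩ V) + P A * P (C ∩ Vᶜ)
        = P A * (P (C ∩ V) + P (C \ V)) := by rw [mul_add, Set.diff_eq]
    _ = P A * P C := by rw [hsplit2]
    _ = P (A ∩ C) := hAC.symm
    _ = P (A ∩ C ∩ V) + P ((A ∩ C) \ V) := hsplit1.symm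
    _ ≤ P (A ∩ C ∩ V) + P A * P (C ∩ Vᶜ) := by
        refine add_le_add_right ?_ _
        calc P ((A ∩ C) \ V) = P (A ∩ (C ∩ Vᶜ)) := by
              rw [Set.diff_eq, Set.inter_assoc]
        _ ≤ P A * P (C ∩ Vᶜ) := hD
  have := ennreal_cancel_right (ENNReal.mul_ne_top (measure_ne_top P A) (measure_ne_top P (C ∩ Vᶜ))) hkey
  calc P A * P (V ∩ C) = P A * P (C ∩ V) := by rw [Set.inter_comm V C]
  _ ≤ P (A ∩ C ∩ V) := this
  _ = P (A ∩ (V ∩ C)) := by rw [Set.inter_assoc, Set.inter_comm C V]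

end Core

end Stmt8
end PercFormal

namespace PercFormal
namespace Stmt8

variable {ι : Type*} {P : Measure (ι → Bool)} [IsProbabilityMeasure P] {S : Set ι}
  {A : Set (ι → Bool)}

theorem finStep (hAm : MeasurableSet A) (hFKG : HypFKG P A) (hIND : HypIND P S A) :
    ∀ (n : ℕ) (s : Finset ι) (B : Set (ι → Bool)),
      (s.filter (fun e => e ∉ S)).card = n → DetBy (↑s) B → FIncreasing S B →
      ∀ N₁ N₀ : Finset ι, (∀ e ∈ N₁, e ∉ S) → (∀ e ∈ N₀, e ∉ S) →
      P A * P (B ∩ Cp N₁ ∩ Cm N₀) ≤ P (A ∩ (B ∩ Cp N₁ ∩ Cm N₀)) := by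
  classical
  intro n
  induction n with
  | zero =>
    intro s B hcard hdet hF N₁ N₀ hN₁ hN₀
    have hsub : (↑s : Set ι) ⊆ S := by
      intro e he
      have he' : e ∈ s := Finset.mem_coe.1 he
      by_contra heS
      have : e ∈ s.filter (fun e => e ∉ S) := Finset.mem_filter.2 ⟨he', heS⟩
      rw [Finset.card_eq_zero.1 hcard] at this
      exact absurd this (Finset.notMem_empty e)
    have hBi : IncreasingEvent B := increasing_of_detBy hsub hdet hF
    have hBm : MeasurableSet B := hdet.measurableSet
    have hCdet : DetBy Sᶜ (Cm N₀) := (detBy_Cm N₀).mono (fun e he => hN₀ e (Finset.mem_coe.1 he))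
    exact core hFKG hIND (hBm.inter (measurableSet_Cp N₁))
      (increasing_inter hBi (increasing_Cp N₁)) (measurableSet_Cm N₀) hCdet
      (increasing_compl_Cm N₀)
  | succ n ih =>
    intro s B hcard hdet hF N₁ N₀ hN₁ hN₀
    obtain ⟨t, ht⟩ := Finset.card_pos.1 (by rw [hcard]; exact n.succ_pos)
    have hts : t ∈ s := (Finset.mem_filter.1 ht).1
    have htS : t ∉ S := (Finset.mem_filter.1 ht).2
    set B1 : Set (ι → Bool) := {x | Function.update x t true ∈ B} with hB1def
    set B0 : Set (ι → Bool) := {x | Function.update x t false ∈ B} with hB0def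
    have hdet' : ∀ b : Bool, DetBy (↑(s.erase t)) {x : ι → Bool | Function.update x t b ∈ B} := by
      intro b x y hxy hx
      refine hdet (fun e he => ?_) hx
      by_cases het : e = t
      · subst het; simp [Function.update_self]
      · rw [Function.update_of_ne het, Function.update_of_ne het]
        exact hxy e (Finset.mem_coe.2 (Finset.mem_erase.2 ⟨het, Finset.mem_coe.1 he⟩))
    have hF' : ∀ b : Bool, FIncreasing S {x : ι → Bool | Function.update x t b ∈ B} := by
      intro b x y hx hle heq
      refine hF hx (fun e he => ?_) (fun e he => ?_)
      · have het : e ≠ t := fun h => htS (h ▸ he)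
        rw [Function.update_of_ne het, Function.update_of_ne het]
        exact hle e he
      · by_cases het : e = t
        · subst het; simp
        · rw [Function.update_of_ne het, Function.update_of_ne het]
          exact heq e he
    have hcard' : ((s.erase t).filter (fun e => e ∉ S)).card = n := by
      rw [Finset.filter_erase, Finset.card_erase_of_mem ht, hcard]
      omega
    have hxupd : ∀ (x : ι → Bool) (b : Bool), x t = b → Function.update x t b = x := by
      intro x b hb; rw [← hb]; exact Function.update_eq_self t x
    have hsplit : B ∩ Cp N₁ ∩ Cm N₀ =
        (B1 ∩ Cp (insert t N₁) ∩ Cm N₀) ∪ (B0 ∩ Cp N₁ ∩ Cm (insert t N₀)) := by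
      ext x
      constructor
      · rintro ⟨⟨hxB, hxp⟩, hxm⟩
        cases hxt : x t with
        | true =>
          refine Or.inl ⟨⟨?_, ?_⟩, hxm⟩
          · show Function.update x t true ∈ B
            rw [hxupd x true hxt]; exact hxB
          · intro e he
            rcases Finset.mem_insert.1 he with rfl | he'
            · exact hxt
            · exact hxp e he'
        | false =>
          refine Or.inr ⟨⟨?_, hxp⟩, ?_⟩
          · show Function.update x t false ∈ B
            rw [hxupd x false hxt]; exact hxB
          · intro e he
            rcases Finset.mem_insert.1 he with rfl | he'
            · exact hxt
            · exact hxm e he'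
      · rintro (⟨⟨hxB, hxp⟩, hxm⟩ | ⟨⟨hxB, hxp⟩, hxm⟩)
        · have hxt : x t = true := hxp t (Finset.mem_insert_self t N₁)
          refine ⟨⟨?_, fun e he => hxp e (Finset.mem_insert_of_mem he)⟩, hxm⟩
          rw [← hxupd x true hxt]; exact hxB
        · have hxt : x t = false := hxm t (Finset.mem_insert_self t N₀)
          refine ⟨⟨?_, hxp⟩, fun e he => hxm e (Finset.mem_insert_of_mem he)⟩
          rw [← hxupd x false hxt]; exact hxB
    have hdisj : Disjoint (B1 ∩ Cp (insert t N₁) ∩ Cm N₀)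
        (B0 ∩ Cp N₁ ∩ Cm (insert t N₀)) := by
      rw [Set.disjoint_left]
      rintro x ⟨⟨_, hxp⟩, _⟩ ⟨⟨_, _⟩, hxm⟩
      have h1 : x t = true := hxp t (Finset.mem_insert_self t N₁)
      have h2 : x t = false := hxm t (Finset.mem_insert_self t N₀)
      rw [h1] at h2; simp at h2
    have hm1 : MeasurableSet (B1 ∩ Cp (insert t N₁) ∩ Cm N₀) :=
      ((hdet' true).measurableSet.inter (measurableSet_Cp _)).inter (measurableSet_Cm _)
    have hm0 : MeasurableSet (B0 ∩ Cp N₁ ∩ Cm (insert t N₀)) :=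
      ((hdet' false).measurableSet.inter (measurableSet_Cp _)).inter (measurableSet_Cm _)
    have ih1 := ih (s.erase t) B1 hcard' (hdet' true) (hF' true) (insert t N₁) N₀
      (fun e he => by rcases Finset.mem_insert.1 he with rfl | he'
                      exacts [htS, hN₁ e he']) hN₀
    have ih0 := ih (s.erase t) B0 hcard' (hdet' false) (hF' false) N₁ (insert t N₀)
      hN₁ (fun e he => by rcases Finset.mem_insert.1 he with rfl | he'
                          exacts [htS, hN₀ e he'])
    rw [hsplit, measure_union hdisj hm0, Set.inter_union_distrib_left,
      measure_union (hdisj.mono Set.inter_subset_right Set.inter_subset_right) (hAm.inter hm0),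
      mul_add]
    exact add_le_add ih1 ih0

end Stmt8
end PercFormal

namespace PercFormal
namespace Stmt8

variable {ι : Type*} {P : Measure (ι → Bool)} [IsProbabilityMeasure P] {S : Set ι}
  {A : Set (ι → Bool)}

theorem Cp_empty : Cp (∅ : Finset ι) = Set.univ := by
  ext x; simp [Cp]

theorem Cm_empty : Cm (∅ : Finset ι) = Set.univ := by
  ext x; simp [Cm]

theorem closedCase (hAm : MeasurableSet A) (hFKG : HypFKG P A) (hIND : HypIND P S A)
    {M : Set ι} (hM : M.Countable) {K : Set (ι → Bool)} (hKc : IsClosed K)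
    (hKdet : DetBy M K) (hKF : FIncreasing S K) :
    MeasurableSet K ∧ P A * P K ≤ P (A ∩ K) := by
  classical
  rcases M.eq_empty_or_nonempty with rfl | hne
  · rcases K.eq_empty_or_nonempty with rfl | ⟨x, hx⟩
    · simp
    · have hKuniv : K = Set.univ := by
        ext y
        simp only [Set.mem_univ, iff_true]
        exact hKdet (fun e he => absurd he (Set.notMem_empty e)) hx
      subst hKuniv
      refine ⟨MeasurableSet.univ, ?_⟩
      rw [measure_univ, mul_one, Set.inter_univ]
  · obtain ⟨f, hf⟩ := Set.Countable.exists_eq_range hM hne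
    set sm : ℕ → Finset ι := fun m => (Finset.range m).image f with hsm
    set Km : ℕ → Set (ι → Bool) :=
      fun m => {x | ∃ y, y ∈ K ∧ ∀ e ∈ sm m, y e = x e} with hKm
    have hdetm : ∀ m, DetBy (↑(sm m)) (Km m) := by
      intro m x y hxy ⟨w, hw1, hw2⟩
      exact ⟨w, hw1, fun e he => (hw2 e he).trans (hxy e (Finset.mem_coe.2 he))⟩
    have hmeasm : ∀ m, MeasurableSet (Km m) := fun m => (hdetm m).measurableSet
    have hFm : ∀ m, FIncreasing S (Km m) := by
      rintro m x x' ⟨y, hy, hagree⟩ hle heq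
      refine ⟨fun e => if e ∈ sm m then x' e else y e, ?_, fun e he => by simp [he]⟩
      refine hKF hy (fun e he => ?_) (fun e he => ?_)
      · by_cases hes : e ∈ sm m
        · rw [if_pos hes, hagree e hes]; exact hle e he
        · rw [if_neg hes]
      · by_cases hes : e ∈ sm m
        · rw [if_pos hes, hagree e hes]; exact heq e he
        · rw [if_neg hes]
    have hanti : Antitone Km := by
      intro m m' hmm x ⟨y, hy, hagree⟩
      exact ⟨y, hy, fun e he =>
        hagree e (Finset.image_subset_image (Finset.range_subset_range.2 hmm) he)⟩
    have hKsub : ∀ m, K ⊆ Km m := fun m x hx => ⟨x, hx, fun e _ => rfl⟩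
    have hiInter : (⋂ m, Km m) = K := by
      refine Set.Subset.antisymm ?_ (fun x hx => Set.mem_iInter.2 fun m => hKsub m hx)
      intro x hx
      have hx' : ∀ m, x ∈ Km m := Set.mem_iInter.1 hx
      set w : ℕ → ι → Bool := fun m => (hx' m).choose with hw
      have hw1 : ∀ m, w m ∈ K := fun m => (hx' m).choose_spec.1
      have hw2 : ∀ m, ∀ e ∈ sm m, w m e = x e := fun m => (hx' m).choose_spec.2
      set z : ℕ → ι → Bool := fun m e => if e ∈ M then w m e else x e with hz
      have hzK : ∀ m, z m ∈ K := by
        intro m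
        refine hKdet (fun e he => ?_) (hw1 m)
        simp [hz, he]
      have htend : Tendsto z atTop (𝓝 x) := by
        rw [tendsto_pi_nhds]
        intro e
        by_cases heM : e ∈ M
        · obtain ⟨j, hj⟩ : ∃ j, f j = e := by rwa [hf, Set.mem_range] at heM
          refine tendsto_const_nhds.congr' ?_
          refine eventually_atTop.2 ⟨j + 1, fun m hm => ?_⟩
          have hes : e ∈ sm m :=
            Finset.mem_image.2 ⟨j, Finset.mem_range.2 (Nat.lt_of_succ_le hm), hj⟩
          simp only [hz, if_pos heM]
          exact (hw2 m e hes).symm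
        · refine tendsto_const_nhds.congr' ?_
          exact Eventually.of_forall fun m => by simp [hz, heM]
      exact hKc.mem_of_tendsto htend (Eventually.of_forall hzK)
    have hKmeas : MeasurableSet K := by
      rw [← hiInter]; exact MeasurableSet.iInter hmeasm
    refine ⟨hKmeas, ?_⟩
    have h1 : ∀ m, P A * P K ≤ P (A ∩ Km m) := by
      intro m
      have := finStep hAm hFKG hIND ((sm m).filter (fun e => e ∉ S)).card (sm m) (Km m)
        rfl (hdetm m) (hFm m) ∅ ∅ (by simp) (by simp)
      rw [Cp_empty, Cm_empty, Set.inter_univ, Set.inter_univ] at this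
      calc P A * P K ≤ P A * P (Km m) := mul_le_mul_right (measure_mono (hKsub m)) (P A)
      _ ≤ P (A ∩ Km m) := this
    have h2 : P (A ∩ K) = ⨅ m, P (A ∩ Km m) := by
      rw [← hiInter, Set.inter_iInter]
      exact Antitone.measure_iInter
        (fun m m' hmm => Set.inter_subset_inter_right _ (hanti hmm))
        (fun m => (hAm.inter (hmeasm m)).nullMeasurableSet) ⟨0, measure_ne_top P _⟩
    rw [h2]
    exact le_iInf h1

end Stmt8
end PercFormal

namespace PercFormal
namespace Stmt8

variable {ι : Type*}

/-- the `S`-increasing hull of `K` relative to determining set `M`. -/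
def Hull (S M : Set ι) (K : Set (ι → Bool)) : Set (ι → Bool) :=
  {x | ∃ y, y ∈ K ∧ (∀ e ∈ M, e ∈ S → y e ≤ x e) ∧ (∀ e ∈ M, e ∉ S → y e = x e)}

theorem hull_subset {S M : Set ι} {K : Set (ι → Bool)} : K ⊆ Hull S M K :=
  fun x hx => ⟨x, hx, fun _ _ _ => le_rfl, fun _ _ _ => rfl⟩

theorem hull_detBy {S M : Set ι} {K : Set (ι → Bool)} : DetBy M (Hull S M K) := by
  rintro x x' hxx ⟨y, hy, h1, h2⟩
  exact ⟨y, hy, fun e he heS => (h1 e he heS).trans (le_of_eq (hxx e he)),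
    fun e he heS => (h2 e he heS).trans (hxx e he)⟩

theorem hull_FIncr {S M : Set ι} {K : Set (ι → Bool)} : FIncreasing S (Hull S M K) := by
  rintro x x' ⟨y, hy, h1, h2⟩ hle heq
  exact ⟨y, hy, fun e he heS => (h1 e he heS).trans (hle e heS),
    fun e he heS => (h2 e he heS).trans (heq e heS)⟩

theorem hull_subset_of {S M : Set ι} {K B : Set (ι → Bool)} (hKdet : DetBy M K)
    (hB : FIncreasing S B) (hKB : K ⊆ B) : Hull S M K ⊆ B := by
  rintro x ⟨y, hy, h1, h2⟩
  classical
  have hyK : (fun e => if e ∈ M then y e else x e) ∈ K :=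
    hKdet (fun e he => by simp [he]) hy
  refine hB (hKB hyK) (fun e heS => ?_) (fun e heS => ?_)
  · by_cases heM : e ∈ M
    · simpa [heM] using h1 e heM heS
    · simp [heM]
  · by_cases heM : e ∈ M
    · simpa [heM] using h2 e heM heS
    · simp [heM]

theorem hull_isClosed {S M : Set ι} {K : Set (ι → Bool)} (hKc : IsClosed K) :
    IsClosed (Hull S M K) := by
  set L : Set ((ι → Bool) × (ι → Bool)) :=
    (Prod.fst ⁻¹' K) ∩ ((⋂ (e : ι) (_ : e ∈ M ∧ e ∈ S), {p | p.1 e ≤ p.2 e}) ∩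
      (⋂ (e : ι) (_ : e ∈ M ∧ e ∉ S), {p | p.1 e = p.2 e})) with hL
  have hLclosed : IsClosed L := by
    refine (hKc.preimage continuous_fst).inter (IsClosed.inter ?_ ?_)
    · refine isClosed_iInter fun e => isClosed_iInter fun _ => ?_
      have hc : Continuous fun p : (ι → Bool) × (ι → Bool) => (p.1 e, p.2 e) :=
        ((continuous_apply e).comp continuous_fst).prodMk
          ((continuous_apply e).comp continuous_snd)
      exact (isClosed_discrete {q : Bool × Bool | q.1 ≤ q.2}).preimage hc
    · refine isClosed_iInter fun e => isClosed_iInter fun _ => ?_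
      exact isClosed_eq ((continuous_apply e).comp continuous_fst)
        ((continuous_apply e).comp continuous_snd)
  have himg : Hull S M K = Prod.snd '' L := by
    ext x
    constructor
    · rintro ⟨y, hy, h1, h2⟩
      refine ⟨(y, x), ⟨hy, ?_, ?_⟩, rfl⟩
      · exact Set.mem_iInter.2 fun e => Set.mem_iInter.2 fun he => h1 e he.1 he.2
      · exact Set.mem_iInter.2 fun e => Set.mem_iInter.2 fun he => h2 e he.1 he.2
    · rintro ⟨⟨y, x'⟩, ⟨hy, h1, h2⟩, rfl⟩
      exact ⟨y, hy,
        fun e he heS => Set.mem_iInter.1 (Set.mem_iInter.1 h1 e) ⟨he, heS⟩,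
        fun e he heS => Set.mem_iInter.1 (Set.mem_iInter.1 h2 e) ⟨he, heS⟩⟩
  rw [himg]
  exact ((hLclosed.isCompact).image continuous_snd).isClosed

end Stmt8
end PercFormal

namespace PercFormal
namespace Stmt8

variable {ι : Type*}

/-- `B` can be approximated from inside by closed countably-determined sets. -/
def GoodIn (P : Measure (ι → Bool)) (B : Set (ι → Bool)) : Prop :=
  ∀ ε : ℝ≥0∞, ε ≠ 0 →
    ∃ K M, K ⊆ B ∧ IsClosed K ∧ Set.Countable M ∧ DetBy M K ∧ P (B \ K) ≤ ε

theorem goodIn_cylinder (P : Measure (ι → Bool)) (e : ι) (s' : Set Bool) :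
    GoodIn P ((fun ω : ι → Bool => ω e) ⁻¹' s') := by
  intro ε hε
  refine ⟨_, {e}, Set.Subset.rfl, (isClosed_discrete s').preimage (continuous_apply e),
    Set.countable_singleton e, ?_, by simp⟩
  intro x y hxy hx
  have : x e = y e := hxy e rfl
  simpa [Set.mem_preimage, ← this] using hx

theorem goodIn_of_measurable (P : Measure (ι → Bool)) [IsFiniteMeasure P]
    {B : Set (ι → Bool)} (hB : MeasurableSet B) : GoodIn P B := by
  classical
  set m' : MeasurableSpace (ι → Bool) :=
    { MeasurableSet' := fun B => MeasurableSet B ∧ GoodIn P B ∧ GoodIn P Bᶜ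
      measurableSet_empty := by
        refine ⟨MeasurableSet.empty, ?_, ?_⟩
        · intro ε hε
          exact ⟨∅, ∅, Set.Subset.rfl, isClosed_empty, Set.countable_empty,
            fun x y _ hx => hx.elim, by simp⟩
        · intro ε hε
          refine ⟨Set.univ, ∅, by simp, isClosed_univ, Set.countable_empty,
            fun x y _ _ => trivial, by simp⟩
      measurableSet_compl := by
        rintro B ⟨hm, h1, h2⟩
        exact ⟨hm.compl, h2, by rwa [compl_compl]⟩
      measurableSet_iUnion := by
        intro f hf
        have hfm : ∀ n, MeasurableSet (f n) := fun n => (hf n).1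
        refine ⟨MeasurableSet.iUnion hfm, ?_, ?_⟩
        · -- inner approximation of the union
          intro ε hε
          set δ : ℕ → ℝ≥0∞ := fun n => (ε / 2) * (2⁻¹) ^ (n + 1) with hδ
          have hε2 : ε / 2 ≠ 0 := by
            simp only [ne_eq, ENNReal.div_eq_zero_iff, not_or]
            exact ⟨hε, by norm_num⟩
          have hδ0 : ∀ n, δ n ≠ 0 := by
            intro n
            exact mul_ne_zero hε2 (pow_ne_zero _ (ENNReal.inv_ne_zero.2 (by norm_num)))
          have hsum : ∑' n, δ n = ε / 2 := by
            rw [ENNReal.tsum_mul_left]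
            have h1 : ∑' n : ℕ, (2⁻¹ : ℝ≥0∞) ^ (n + 1) = 2⁻¹ * ∑' n : ℕ, (2⁻¹ : ℝ≥0∞) ^ n := by
              rw [← ENNReal.tsum_mul_left]
              congr 1
              ext n
              rw [pow_succ, mul_comm]
            rw [h1, ENNReal.tsum_geometric, ENNReal.one_sub_inv_two, inv_inv]
            have : (2⁻¹ : ℝ≥0∞) * 2 = 1 := by
              rw [← ENNReal.inv_mul_cancel (by norm_num : (2:ℝ≥0∞) ≠ 0) (by norm_num)]
            rw [this, mul_one]
          choose K M hK1 hK2 hK3 hK4 hK5 using fun n => (hf n).2.1 (δ n) (hδ0 n)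
          -- choose a finite stage
          set g : ℕ → Set (ι → Bool) :=
            fun N => (⋃ n, f n) \ ⋃ n ∈ Finset.range N, f n with hg
          have hgmeas : ∀ N, MeasurableSet (g N) :=
            fun N => (MeasurableSet.iUnion hfm).diff
              (MeasurableSet.biUnion (Finset.range N).countable_toSet fun n _ => hfm n)
          have hganti : Antitone g := by
            intro N N' hNN
            show g N' ⊆ g N
            intro x hx
            refine ⟨hx.1, fun hmem => hx.2 ?_⟩
            rcases Set.mem_iUnion₂.1 hmem with ⟨n, hn, hxn⟩
            exact Set.mem_iUnion₂.2 ⟨n, Finset.mem_range.2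
              (lt_of_lt_of_le (Finset.mem_range.1 hn) hNN), hxn⟩
          have hginter : (⋂ N, g N) = ∅ := by
            ext x
            simp only [Set.mem_iInter, Set.mem_empty_iff_false, iff_false, not_forall]
            by_cases hx : x ∈ ⋃ n, f n
            · rcases Set.mem_iUnion.1 hx with ⟨n₀, hn₀⟩
              exact ⟨n₀ + 1, fun hmem => hmem.2 (Set.mem_iUnion₂.2
                ⟨n₀, Finset.mem_range.2 (Nat.lt_succ_self n₀), hn₀⟩)⟩
            · exact ⟨0, fun hmem => hx hmem.1⟩
          have htend : Tendsto (fun N => P (g N)) atTop (𝓝 0) := by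
            have := tendsto_measure_iInter_atTop
              (fun N => (hgmeas N).nullMeasurableSet) hganti ⟨0, measure_ne_top P _⟩
            rwa [hginter, measure_empty] at this
          obtain ⟨N, hN⟩ := (ENNReal.tendsto_atTop_zero.1 htend (ε / 2)
            (pos_iff_ne_zero.2 hε2))
          have hNle : P (g N) ≤ ε / 2 := hN N le_rfl
          refine ⟨⋃ n ∈ Finset.range N, K n, ⋃ n, M n, ?_, ?_, ?_, ?_, ?_⟩
          · refine Set.iUnion₂_subset fun n _ => (hK1 n).trans (Set.subset_iUnion f n)
          · exact (Finset.range N).finite_toSet.isClosed_biUnion fun n _ => hK2 n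
          · exact Set.countable_iUnion hK3
          · intro x y hxy hx
            rcases Set.mem_iUnion₂.1 hx with ⟨n, hn, hxn⟩
            exact Set.mem_iUnion₂.2 ⟨n, hn,
              ((hK4 n).mono (Set.subset_iUnion M n)) hxy hxn⟩
          · have hsub : (⋃ n, f n) \ (⋃ n ∈ Finset.range N, K n) ⊆
                g N ∪ ⋃ n ∈ Finset.range N, (f n \ K n) := by
              intro x hx
              by_cases hmem : x ∈ ⋃ n ∈ Finset.range N, f n
              · rcases Set.mem_iUnion₂.1 hmem with ⟨n, hn, hxn⟩
                refine Or.inr (Set.mem_iUnion₂.2 ⟨n, hn, hxn, fun hxK => hx.2 ?_⟩)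
                exact Set.mem_iUnion₂.2 ⟨n, hn, hxK⟩
              · exact Or.inl ⟨hx.1, hmem⟩
            calc P ((⋃ n, f n) \ ⋃ n ∈ Finset.range N, K n)
                ≤ P (g N ∪ ⋃ n ∈ Finset.range N, (f n \ K n)) := measure_mono hsub
            _ ≤ P (g N) + P (⋃ n ∈ Finset.range N, (f n \ K n)) := measure_union_le _ _
            _ ≤ ε / 2 + ∑ n ∈ Finset.range N, P (f n \ K n) := by
                exact add_le_add hNle (measure_biUnion_finset_le _ _)
            _ ≤ ε / 2 + ∑ n ∈ Finset.range N, δ n := by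
                exact add_le_add_right (Finset.sum_le_sum fun n _ => hK5 n) _
            _ ≤ ε / 2 + ε / 2 := by
                refine add_le_add_right ?_ _
                rw [← hsum]
                exact ENNReal.sum_le_tsum _
            _ = ε := ENNReal.add_halves ε
        · -- inner approximation of the complement of the union
          intro ε hε
          set δ : ℕ → ℝ≥0∞ := fun n => (ε / 2) * (2⁻¹) ^ (n + 1) with hδ
          have hε2 : ε / 2 ≠ 0 := by
            simp only [ne_eq, ENNReal.div_eq_zero_iff, not_or]
            exact ⟨hε, by norm_num⟩
          have hδ0 : ∀ n, δ n ≠ 0 := by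
            intro n
            exact mul_ne_zero hε2 (pow_ne_zero _ (ENNReal.inv_ne_zero.2 (by norm_num)))
          have hsum : ∑' n, δ n = ε / 2 := by
            rw [ENNReal.tsum_mul_left]
            have h1 : ∑' n : ℕ, (2⁻¹ : ℝ≥0∞) ^ (n + 1) = 2⁻¹ * ∑' n : ℕ, (2⁻¹ : ℝ≥0∞) ^ n := by
              rw [← ENNReal.tsum_mul_left]
              congr 1
              ext n
              rw [pow_succ, mul_comm]
            rw [h1, ENNReal.tsum_geometric, ENNReal.one_sub_inv_two, inv_inv]
            have : (2⁻¹ : ℝ≥0∞) * 2 = 1 := by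
              rw [← ENNReal.inv_mul_cancel (by norm_num : (2:ℝ≥0∞) ≠ 0) (by norm_num)]
            rw [this, mul_one]
          choose K M hK1 hK2 hK3 hK4 hK5 using fun n => (hf n).2.2 (δ n) (hδ0 n)
          refine ⟨⋂ n, K n, ⋃ n, M n, ?_, isClosed_iInter hK2, Set.countable_iUnion hK3,
            ?_, ?_⟩
          · intro x hx
            rw [Set.compl_iUnion]
            exact Set.mem_iInter.2 fun n => hK1 n (Set.mem_iInter.1 hx n)
          · intro x y hxy hx
            exact Set.mem_iInter.2 fun n =>
              ((hK4 n).mono (Set.subset_iUnion M n)) hxy (Set.mem_iInter.1 hx n)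
          · have hsub : (⋃ n, f n)ᶜ \ (⋂ n, K n) ⊆ ⋃ n, ((f n)ᶜ \ K n) := by
              intro x hx
              rw [Set.compl_iUnion] at hx
              obtain ⟨n, hn⟩ : ∃ n, x ∉ K n := by
                by_contra hc
                push_neg at hc
                exact hx.2 (Set.mem_iInter.2 hc)
              exact Set.mem_iUnion.2 ⟨n, Set.mem_iInter.1 hx.1 n, hn⟩
            calc P ((⋃ n, f n)ᶜ \ ⋂ n, K n) ≤ P (⋃ n, ((f n)ᶜ \ K n)) := measure_mono hsub
            _ ≤ ∑' n, P ((f n)ᶜ \ K n) := measure_iUnion_le _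
            _ ≤ ∑' n, δ n := ENNReal.tsum_le_tsum hK5
            _ = ε / 2 := hsum
            _ ≤ ε := ENNReal.half_le_self } with hm'
  have hle : (MeasurableSpace.pi : MeasurableSpace (ι → Bool)) ≤ m' := by
    refine iSup_le fun e => ?_
    rintro t ⟨s', hs', rfl⟩
    refine ⟨(measurable_pi_apply e) hs', goodIn_cylinder P e s', ?_⟩
    rw [← Set.preimage_compl]
    exact goodIn_cylinder P e s'ᶜ
  exact (hle B hB).2.1

end Stmt8
end PercFormal

namespace PercFormal
namespace Stmt8

variable {ι : Type*} {P : Measure (ι → Bool)} [IsProbabilityMeasure P] {S : Set ι}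
  {A : Set (ι → Bool)}

/-- The key abstract inequality. -/
theorem key (hAm : MeasurableSet A) (hFKG : HypFKG P A) (hIND : HypIND P S A)
    {B : Set (ι → Bool)} (hBm : MeasurableSet B) (hBF : FIncreasing S B) :
    P A * P B ≤ P (A ∩ B) := by
  refine ENNReal.le_of_forall_pos_le_add fun ε hε _ => ?_
  obtain ⟨K, M, hK1, hK2, hK3, hK4, hK5⟩ :=
    goodIn_of_measurable P hBm (ε : ℝ≥0∞) (by exact_mod_cast hε.ne')
  have hH1 : IsClosed (Hull S M K) := hull_isClosed hK2
  have hH2 : DetBy M (Hull S M K) := hull_detBy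
  have hH3 : FIncreasing S (Hull S M K) := hull_FIncr
  have hH4 : Hull S M K ⊆ B := hull_subset_of hK4 hBF hK1
  obtain ⟨-, hHineq⟩ := closedCase hAm hFKG hIND hK3 hH1 hH2 hH3
  calc P A * P B ≤ P A * (P K + P (B \ K)) := by
        refine mul_le_mul_right ?_ _
        refine (measure_mono ?_).trans (measure_union_le _ _)
        intro x hx
        by_cases hxK : x ∈ K
        · exact Or.inl hxK
        · exact Or.inr ⟨hx, hxK⟩
  _ = P A * P K + P A * P (B \ K) := mul_add _ _ _
  _ ≤ P (A ∩ Hull S M K) + (ε : ℝ≥0∞) := by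
      refine add_le_add ?_ ?_
      · calc P A * P K ≤ P A * P (Hull S M K) :=
              mul_le_mul_right (measure_mono hull_subset) _
        _ ≤ P (A ∩ Hull S M K) := hHineq
      · calc P A * P (B \ K) ≤ 1 * (ε : ℝ≥0∞) :=
              mul_le_mul' prob_le_one hK5
        _ = (ε : ℝ≥0∞) := one_mul _
  _ ≤ P (A ∩ B) + (ε : ℝ≥0∞) :=
      add_le_add_left (measure_mono (Set.inter_subset_inter_right _ hH4)) _

end Stmt8
end PercFormal


namespace PercFormal
namespace Stmt8

section Graph

variable {V : Type*} (G : SimpleGraph V)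

theorem subset_clk (k : ℕ) (F : Set G.edgeSet) : F ⊆ clk G k F := by
  intro e he
  by_cases hk : k = 0
  · rw [clk, if_pos hk]; exact he
  · rw [clk, if_neg hk]
    exact ⟨e, he, (e : Sym2 V).out.1, (e : Sym2 V).out.1, Sym2.out_fst_mem _,
      Sym2.out_fst_mem _, SimpleGraph.Walk.nil, by
        simpa using Nat.pos_of_ne_zero hk⟩

theorem edgeDistGE_clk_compl (k : ℕ) (F : Set G.edgeSet) :
    edgeDistGE G k F (clk G k F)ᶜ := by
  intro e₁ h₁ e₂ h₂ u v hu hv w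
  by_contra hlen
  push_neg at hlen
  have hk : k ≠ 0 := by omega
  refine h₂ ?_
  rw [clk, if_neg hk]
  exact ⟨e₁, h₁, v, u, hv, hu, w.reverse, by
    rw [SimpleGraph.Walk.length_reverse]; exact hlen⟩

theorem not_mem_clk_of_dist {k : ℕ} {F₁ F₂ : Set G.edgeSet} (hdisj : Disjoint F₁ F₂)
    (hdist : edgeDistGE G k F₁ F₂) : ∀ e ∈ F₂, e ∉ clk G k F₁ := by
  intro e he hc
  by_cases hk : k = 0
  · rw [clk, if_pos hk] at hc
    exact (Set.disjoint_left.1 hdisj hc) he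
  · rw [clk, if_neg hk] at hc
    obtain ⟨f, hf, u, v, hu, hv, w, hw⟩ := hc
    have := hdist f hf e he v u hv hu w.reverse
    rw [SimpleGraph.Walk.length_reverse] at this
    omega

end Graph

end Stmt8

open Stmt8 in
theorem statement8 {V : Type*} (G : SimpleGraph V) (P : Measure (G.edgeSet → Bool))
    (hP : IsProbabilityMeasure P) (k : ℕ) :
    (PositivelyAssociated P ∧ KIndependent G P k) ↔
      (∀ F : Set G.edgeSet, ∀ A : Set (G.edgeSet → Bool),
        SupportedOn A F → FIncreasing F A →
        ∀ B : Set (G.edgeSet → Bool), MeasurableSet B →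
          FIncreasing (clk G k F) B →
          P A * P B ≤ P (A ∩ B)) := by
  classical
  constructor
  · rintro ⟨hPA, hKI⟩ F A hAsupp hAF B hBm hBF
    have hAm : MeasurableSet A := hAsupp.1
    have hAdet : DetBy F A := hAsupp.2
    have hAincr : IncreasingEvent A := increasing_of_detBy Set.Subset.rfl hAdet hAF
    have hFKG : HypFKG P A := fun V' hVm hVi => hPA A V' hAm hVm hAincr hVi
    have hIND : HypIND P (clk G k F) A := by
      intro C hCm hCdet
      exact hKI F (clk G k F)ᶜ
        (Set.disjoint_left.2 fun e heF heC => heC (subset_clk G k F heF))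
        (edgeDistGE_clk_compl G k F) A C hAsupp ⟨hCm, hCdet⟩
    exact key hAm hFKG hIND hBm hBF
  · intro hyp
    constructor
    · -- positive association
      intro A B hAm hBm hAi hBi
      refine hyp Set.univ A ⟨hAm, fun ω ω' h hω => ?_⟩
        (fun ω ω' hω h1 _ => hAi hω (fun e => h1 e trivial)) B hBm
        (fun ω ω' hω h1 h2 => hBi hω (fun e => ?_))
      · have : ω = ω' := funext fun e => h e trivial
        rwa [← this]
      · by_cases he : e ∈ clk G k Set.univ
        · exact h1 e he
        · exact le_of_eq (h2 e he)
    · -- k-independence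
      intro F₁ F₂ hdisj hdist A B hAsupp hBsupp
      have hBm : MeasurableSet B := hBsupp.1
      have hnotin : ∀ e ∈ F₂, e ∉ clk G k F₁ := not_mem_clk_of_dist G hdisj hdist
      have hBF : FIncreasing (clk G k F₁) B := fun ω ω' hω _ h2 =>
        hBsupp.2 (fun e he => h2 e (fun hc => hnotin e he hc)) hω
      have hBcF : FIncreasing (clk G k F₁) Bᶜ := fun ω ω' hω _ h2 hω' =>
        hω (hBsupp.2 (fun e he => (h2 e (fun hc => hnotin e he hc)).symm) hω')
      set 𝒞 : Set (Set (G.edgeSet → Bool)) :=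
        {C | ∃ s : Finset G.edgeSet, ↑s ⊆ F₁ ∧ C = Cp s} with h𝒞
      have hpi : IsPiSystem 𝒞 := by
        rintro C ⟨s, hs, rfl⟩ D ⟨t, ht, rfl⟩ -
        refine ⟨s ∪ t, by rw [Finset.coe_union]; exact Set.union_subset hs ht, ?_⟩
        ext x
        simp only [Cp, Set.mem_inter_iff, Set.mem_setOf_eq, Finset.mem_union, or_imp,
          forall_and]
      have hbasic : ∀ C ∈ 𝒞, P (C ∩ B) = P C * P B := by
        rintro C ⟨s, hs, rfl⟩
        have hCm : MeasurableSet (Cp s) := measurableSet_Cp s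
        have hCsupp : SupportedOn (Cp s) F₁ := ⟨hCm, (detBy_Cp s).mono hs⟩
        have hCF : FIncreasing F₁ (Cp s) := by
          intro x y hx h1 _ e he
          have := h1 e (hs (Finset.mem_coe.2 he))
          rw [hx e he] at this
          exact le_antisymm (Bool.le_true _) this
        have h1 := hyp F₁ (Cp s) hCsupp hCF B hBm hBF
        have h2 := hyp F₁ (Cp s) hCsupp hCF Bᶜ hBm.compl hBcF
        have hadd : P (Cp s ∩ B) + P (Cp s ∩ Bᶜ) = P (Cp s) := by
          have := measure_inter_add_diff (μ := P) (Cp s) hBm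
          rwa [Set.diff_eq] at this
        have hcompl : P B + P Bᶜ = 1 := prob_add_prob_compl hBm
        refine le_antisymm ?_ h1
        refine ennreal_cancel_right
          (ENNReal.mul_ne_top (measure_ne_top P _) (measure_ne_top P _))
          (c := P (Cp s) * P Bᶜ) ?_
        calc P (Cp s ∩ B) + P (Cp s) * P Bᶜ
            ≤ P (Cp s ∩ B) + P (Cp s ∩ Bᶜ) := add_le_add_right h2 _
        _ = P (Cp s) := hadd
        _ = P (Cp s) * (P B + P Bᶜ) := by rw [hcompl, mul_one]
        _ = P (Cp s) * P B + P (Cp s) * P Bᶜ := mul_add _ _ _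
      have hm₁le : MeasurableSpace.generateFrom 𝒞 ≤
          (inferInstance : MeasurableSpace (G.edgeSet → Bool)) := by
        refine MeasurableSpace.generateFrom_le ?_
        rintro C ⟨s, hs, rfl⟩
        exact measurableSet_Cp s
      have hind := @MeasurableSpace.induction_on_inter (G.edgeSet → Bool)
        (MeasurableSpace.generateFrom 𝒞) (fun t _ => P (t ∩ B) = P t * P B) 𝒞 rfl hpi
        (by simp) hbasic ?_ ?_
      rotate_left
      · -- complements
        intro t htm ht
        have htm' : MeasurableSet t := hm₁le t htm
        have hadd : P (tᶜ ∩ B) + P (t ∩ B) = P B := by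
          have := measure_inter_add_diff (μ := P) B htm'
          rw [Set.diff_eq, Set.inter_comm B t, Set.inter_comm B tᶜ] at this
          rw [add_comm]
          exact this
        have hcalc : P (tᶜ ∩ B) + P t * P B = P tᶜ * P B + P t * P B := by
          calc P (tᶜ ∩ B) + P t * P B = P (tᶜ ∩ B) + P (t ∩ B) := by rw [ht]
          _ = P B := hadd
          _ = 1 * P B := (one_mul _).symm
          _ = (P tᶜ + P t) * P B := by
              rw [add_comm (P tᶜ) (P t), prob_add_prob_compl htm']
          _ = P tᶜ * P B + P t * P B := add_mul _ _ _
        exact (ENNReal.add_left_inj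
          (ENNReal.mul_ne_top (measure_ne_top P t) (measure_ne_top P B))).1 hcalc
      · -- disjoint unions
        intro f hdisjf hfm hf
        have hfm' : ∀ n, MeasurableSet (f n) := fun n => hm₁le _ (hfm n)
        calc P ((⋃ n, f n) ∩ B) = P (⋃ n, f n ∩ B) := by rw [Set.iUnion_inter]
        _ = ∑' n, P (f n ∩ B) := measure_iUnion
            (fun i j hij => (hdisjf hij).mono Set.inter_subset_left Set.inter_subset_left)
            (fun n => (hfm' n).inter hBm)
        _ = ∑' n, P (f n) * P B := tsum_congr fun n => hf n
        _ = (∑' n, P (f n)) * P B := ENNReal.tsum_mul_right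
        _ = P (⋃ n, f n) * P B := by rw [measure_iUnion hdisjf hfm']
      -- A is measurable w.r.t. the generated σ-algebra
      set proj : (G.edgeSet → Bool) → (G.edgeSet → Bool) :=
        fun ω e => if e ∈ F₁ then ω e else false with hprojdef
      have hpile : (MeasurableSpace.pi : MeasurableSpace (G.edgeSet → Bool)) ≤
          MeasurableSpace.map proj (MeasurableSpace.generateFrom 𝒞) := by
        refine iSup_le fun e => ?_
        rintro t ⟨s', -, rfl⟩
        rw [MeasurableSpace.map_def]
        by_cases he : e ∈ F₁
        · have hpre : proj ⁻¹' ((fun ω : G.edgeSet → Bool => ω e) ⁻¹' s')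
              = (fun ω : G.edgeSet → Bool => ω e) ⁻¹' s' := by
            ext ω
            simp [hprojdef, he]
          rw [hpre]
          have hCpe : MeasurableSet[MeasurableSpace.generateFrom 𝒞] (Cp {e}) :=
            MeasurableSpace.measurableSet_generateFrom ⟨{e}, by simpa using he, rfl⟩
          by_cases ht : true ∈ s' <;> by_cases hfa : false ∈ s'
          · have : (fun ω : G.edgeSet → Bool => ω e) ⁻¹' s' = Set.univ := by
              ext ω
              simp only [Set.mem_preimage, Set.mem_univ, iff_true]
              cases h : ω e
              exacts [hfa, ht]
            rw [this]
            exact @MeasurableSet.univ _ (MeasurableSpace.generateFrom 𝒞)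
          · have : (fun ω : G.edgeSet → Bool => ω e) ⁻¹' s' = Cp {e} := by
              ext ω
              cases h : ω e <;> simp [Cp, h, ht, hfa]
            rw [this]
            exact hCpe
          · have : (fun ω : G.edgeSet → Bool => ω e) ⁻¹' s' = (Cp {e})ᶜ := by
              ext ω
              cases h : ω e <;> simp [Cp, h, ht, hfa]
            rw [this]
            exact (MeasurableSpace.generateFrom 𝒞).measurableSet_compl _ hCpe
          · have : (fun ω : G.edgeSet → Bool => ω e) ⁻¹' s' = (∅ : Set _) := by
              ext ω
              simp only [Set.mem_preimage, Set.mem_empty_iff_false, iff_false]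
              cases h : ω e
              exacts [hfa, ht]
            rw [this]
            exact @MeasurableSet.empty _ (MeasurableSpace.generateFrom 𝒞)
        · have hpre : proj ⁻¹' ((fun ω : G.edgeSet → Bool => ω e) ⁻¹' s')
              = (if false ∈ s' then Set.univ else (∅ : Set _)) := by
            ext ω
            by_cases hfa : false ∈ s' <;> simp [hprojdef, he, hfa]
          rw [hpre]
          split_ifs
          exacts [@MeasurableSet.univ _ (MeasurableSpace.generateFrom 𝒞),
            @MeasurableSet.empty _ (MeasurableSpace.generateFrom 𝒞)]
      have hAfix : proj ⁻¹' A = A := by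
        ext ω
        constructor
        · intro hω
          exact hAsupp.2 (fun e he => by simp [hprojdef, he]) hω
        · intro hω
          exact hAsupp.2 (fun e he => by simp [hprojdef, he]) hω
      have hAm₁ : MeasurableSet[MeasurableSpace.generateFrom 𝒞] A := by
        have h1 : MeasurableSet[MeasurableSpace.map proj (MeasurableSpace.generateFrom 𝒞)] A :=
          hpile A hAsupp.1
        rw [MeasurableSpace.map_def, hAfix] at h1
        exact h1
      exact hind A hAm₁

end PercFormal

/-- `P` is positively associated and `k`-independent iff for every
`F ⊆ E`, every `F`-increasing event `A` supported on `F`, and every `cl_k(F)`-increasing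
event `B`, one has `P[A ∩ B] ≥ P[A]·P[B]`. -/
theorem positivelyAssociated_and_kIndependent_iff
    {V : Type*} (G : SimpleGraph V) (P : MeasureTheory.Measure (G.edgeSet → Bool))
    (hP : MeasureTheory.IsProbabilityMeasure P) (k : ℕ) :
    (PercFormal.PositivelyAssociated P ∧ PercFormal.KIndependent G P k) ↔
      (∀ F : Set G.edgeSet, ∀ A : Set (G.edgeSet → Bool),
        PercFormal.SupportedOn A F → PercFormal.FIncreasing F A →
        ∀ B : Set (G.edgeSet → Bool), MeasurableSet B →
          PercFormal.FIncreasing (PercFormal.clk G k F) B →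
          P A * P B ≤ P (A ∩ B)) := by
  exact PercFormal.statement8 G P hP k
end
end

section
/- Let p ∈ [0,1] and let P be the probability measure on {0,1}^{\{1,2,3,4\}} under which ω₁ = ω₂ and ω₃ = ω₄ almost surely, with (ω₁, ω₃) a pair of independent Bernoulli(p) random variables. Then P is positively associated with all marginals equal to p, and the increasing event A := {ω₁ = ω₃ = 1} ∪ {ω₂ = ω₄ = 1} satisfies P[A] = p². On the other hand, if Q is the probability measure under which ω_j = Z⁺·Z⁻_j for j = 1,…,4, with Z⁺, Z⁻₁, Z⁻₂, Z⁻₃, Z⁻₄ independent Bernoulli(p), then Q[A] = 2p³ − p⁵, and 2p³ − p⁵ > p² for every p ∈ ((√5 − 1)/2, 1). In particular, for such p, P[A] < Q[A], so the law P of the four coordinates is not stochastically larger than Q on this increasing event. -/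
open MeasureTheory Filter
open scoped ENNReal Classical

noncomputable section

namespace PercFormal

/-- The Bernoulli measure on `Bool` with parameter `p` (for `p ∈ [0,1]`). -/
def bern (p : ℝ) : MeasureTheory.Measure Bool :=
  (PMF.bernoulli (min (Real.toNNReal p) 1) (min_le_right _ _)).toMeasure

instance (p : ℝ) : MeasureTheory.IsProbabilityMeasure (bern p) := by
  unfold bern; infer_instance

/-- The measure `P` of Statement 18: `ω₁ = ω₂` and `ω₃ = ω₄` a.s., with `(ω₁, ω₃)` a pair
of independent Bernoulli(`p`) random variables (coordinates `0,1,2,3` stand for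
`ω₁,…,ω₄`). -/
def P18 (p : ℝ) : MeasureTheory.Measure (Fin 4 → Bool) :=
  ((bern p).prod (bern p)).map (fun z => ![z.1, z.1, z.2, z.2])

/-- The measure `Q` of Statement 18: `ω_j = Z⁺ · Z⁻_j` with `Z⁺, Z⁻₁, …, Z⁻₄` independent
Bernoulli(`p`). -/
def Q18 (p : ℝ) : MeasureTheory.Measure (Fin 4 → Bool) :=
  ((bern p).prod (MeasureTheory.Measure.pi fun _ : Fin 4 => bern p)).map
    (fun z j => z.1 && z.2 j)

/-- The increasing event `A = {ω₁ = ω₃ = 1} ∪ {ω₂ = ω₄ = 1}`. -/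
def A18 : Set (Fin 4 → Bool) :=
  {ω | (ω 0 = true ∧ ω 2 = true) ∨ (ω 1 = true ∧ ω 3 = true)}

end PercFormal


namespace PercFormal

lemma bern_true {p : ℝ} (hp : p ∈ Set.Icc (0:ℝ) 1) : bern p {true} = ENNReal.ofReal p := by
  rw [bern, PMF.toMeasure_apply_singleton _ _ (measurableSet_singleton _),
    PMF.bernoulli_apply, min_eq_left (Real.toNNReal_le_one.mpr hp.2)]
  rfl

lemma bern_univ' (p : ℝ) : bern p {false, true} = 1 := by
  rw [show ({false, true} : Set Bool) = Set.univ from by ext b; cases b <;> simp]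
  exact measure_univ

lemma incr_struct (S : Set (Bool × Bool))
    (h : ∀ ⦃z z' : Bool × Bool⦄, z ∈ S → z ≤ z' → z' ∈ S) :
    S = ∅ ∨ S = Set.univ ∨ S = {true} ×ˢ {true} ∨ S = {true} ×ˢ Set.univ ∨
      S = Set.univ ×ˢ {true} ∨
      S = ({true} ×ˢ (Set.univ : Set Bool)) ∪ ((Set.univ : Set Bool) ×ˢ {true}) := by
  by_cases hff : ((false, false) : Bool × Bool) ∈ S
  · exact Or.inr <| Or.inl <| Set.eq_univ_of_forall fun z =>
      h hff ⟨Bool.false_le _, Bool.false_le _⟩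
  by_cases htt : ((true, true) : Bool × Bool) ∈ S
  swap
  · refine Or.inl (Set.eq_empty_iff_forall_notMem.mpr fun z hz => ?_)
    exact htt (h hz ⟨Bool.le_true _, Bool.le_true _⟩)
  by_cases htf : ((true, false) : Bool × Bool) ∈ S <;>
    by_cases hft : ((false, true) : Bool × Bool) ∈ S
  · refine Or.inr <| Or.inr <| Or.inr <| Or.inr <| Or.inr ?_
    ext ⟨a, b⟩; cases a <;> cases b <;> simp_all [Set.mem_prod]
  · refine Or.inr <| Or.inr <| Or.inr <| Or.inl ?_
    ext ⟨a, b⟩; cases a <;> cases b <;> simp_all [Set.mem_prod]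
  · refine Or.inr <| Or.inr <| Or.inr <| Or.inr <| Or.inl ?_
    ext ⟨a, b⟩; cases a <;> cases b <;> simp_all [Set.mem_prod]
  · refine Or.inr <| Or.inr <| Or.inl ?_
    ext ⟨a, b⟩; cases a <;> cases b <;> simp_all [Set.mem_prod]

lemma aux_sub {α : Type*} [MeasurableSpace α] (μ : Measure α) [IsProbabilityMeasure μ]
    {A B : Set α} (h : A ⊆ B) : μ A * μ B ≤ μ (A ∩ B) := by
  rw [Set.inter_eq_self_of_subset_left h]
  calc μ A * μ B ≤ μ A * 1 := mul_le_mul_right prob_le_one _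
  _ = μ A := mul_one _

lemma aux_sub' {α : Type*} [MeasurableSpace α] (μ : Measure α) [IsProbabilityMeasure μ]
    {A B : Set α} (h : B ⊆ A) : μ A * μ B ≤ μ (A ∩ B) := by
  rw [Set.inter_eq_self_of_subset_right h]
  calc μ A * μ B ≤ 1 * μ B := mul_le_mul_left prob_le_one _
  _ = μ B := one_mul _

lemma fkg2 (p : ℝ) (A B : Set (Bool × Bool))
    (hA : ∀ ⦃z z' : Bool × Bool⦄, z ∈ A → z ≤ z' → z' ∈ A)
    (hB : ∀ ⦃z z' : Bool × Bool⦄, z ∈ B → z ≤ z' → z' ∈ B) :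
    ((bern p).prod (bern p)) A * ((bern p).prod (bern p)) B ≤
      ((bern p).prod (bern p)) (A ∩ B) := by
  set μ := (bern p).prod (bern p) with hμ
  have hTP : ({true} ×ˢ {true} : Set (Bool × Bool)) ⊆ {true} ×ˢ Set.univ :=
    Set.prod_mono subset_rfl (Set.subset_univ _)
  have hTQ : ({true} ×ˢ {true} : Set (Bool × Bool)) ⊆ Set.univ ×ˢ {true} :=
    Set.prod_mono (Set.subset_univ _) subset_rfl
  have hPR : ({true} ×ˢ Set.univ : Set (Bool × Bool)) ⊆
      ({true} ×ˢ (Set.univ : Set Bool)) ∪ ((Set.univ : Set Bool) ×ˢ {true}) :=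
    Set.subset_union_left
  have hQR : (Set.univ ×ˢ {true} : Set (Bool × Bool)) ⊆
      ({true} ×ˢ (Set.univ : Set Bool)) ∪ ((Set.univ : Set Bool) ×ˢ {true}) :=
    Set.subset_union_right
  have hPQ : ({true} ×ˢ Set.univ : Set (Bool × Bool)) ∩ (Set.univ ×ˢ {true}) =
      {true} ×ˢ {true} := by
    ext ⟨a, b⟩; cases a <;> cases b <;> simp [Set.mem_prod]
  rcases incr_struct A hA with rfl | rfl | rfl | rfl | rfl | rfl <;>
    rcases incr_struct B hB with rfl | rfl | rfl | rfl | rfl | rfl <;>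
    first
      | simp only [measure_empty, zero_mul, mul_zero, zero_le]
      | (rw [Set.univ_inter]; simp only [measure_univ, one_mul]; exact le_rfl)
      | (rw [Set.inter_univ]; simp only [measure_univ, mul_one]; exact le_rfl)
      | exact aux_sub μ subset_rfl
      | exact aux_sub μ hTP
      | exact aux_sub μ hTQ
      | exact aux_sub μ (hTP.trans hPR)
      | exact aux_sub μ hPR
      | exact aux_sub μ hQR
      | exact aux_sub' μ hTP
      | exact aux_sub' μ hTQ
      | exact aux_sub' μ (hTP.trans hPR)
      | exact aux_sub' μ hPR
      | exact aux_sub' μ hQR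
      | (rw [hPQ, hμ, Measure.prod_prod, Measure.prod_prod, Measure.prod_prod];
         simp [measure_univ, bern_univ', mul_comm])
      | (rw [Set.inter_comm, hPQ, hμ, Measure.prod_prod, Measure.prod_prod,
            Measure.prod_prod];
         simp [measure_univ, bern_univ', mul_comm])

section computations
variable {p : ℝ}

lemma pull_incr {A : Set (Fin 4 → Bool)} (hAi : IncreasingEvent A) :
    ∀ ⦃z z' : Bool × Bool⦄,
      z ∈ (fun z : Bool × Bool => ![z.1, z.1, z.2, z.2]) ⁻¹' A → z ≤ z' →
      z' ∈ (fun z : Bool × Bool => ![z.1, z.1, z.2, z.2]) ⁻¹' A := by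
  intro z z' hz hle
  refine hAi hz ?_
  intro j
  have h1 : z.1 ≤ z'.1 := hle.1
  have h2 : z.2 ≤ z'.2 := hle.2
  fin_cases j <;> simpa

lemma P18_A18 (hp : p ∈ Set.Icc (0:ℝ) 1) : P18 p A18 = ENNReal.ofReal (p ^ 2) := by
  have hm : MeasurableSet A18 := (Set.toFinite _).measurableSet
  rw [P18, Measure.map_apply (measurable_of_countable _) hm]
  have hpre : (fun z : Bool × Bool => ![z.1, z.1, z.2, z.2]) ⁻¹' A18 =
      ({true} : Set Bool) ×ˢ ({true} : Set Bool) := by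
    ext ⟨a, b⟩; cases a <;> cases b <;> simp [A18, Set.mem_prod]
  rw [hpre, Measure.prod_prod, bern_true hp, ← ENNReal.ofReal_mul hp.1, ← sq]

lemma P18_marg (hp : p ∈ Set.Icc (0:ℝ) 1) (j : Fin 4) : P18 p {ω | ω j = true} = ENNReal.ofReal p := by
  fin_cases j
  · show P18 p {ω | ω 0 = true} = ENNReal.ofReal p
    rw [P18, Measure.map_apply (measurable_of_countable _) ((Set.toFinite _).measurableSet)]
    have : (fun z : Bool × Bool => ![z.1, z.1, z.2, z.2]) ⁻¹' {ω | ω 0 = true} =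
        ({true} : Set Bool) ×ˢ (Set.univ : Set Bool) := by
      ext ⟨a, b⟩; cases a <;> cases b <;> simp [Set.mem_prod]
    rw [this, Measure.prod_prod, bern_true hp, measure_univ, mul_one]
  · show P18 p {ω | ω 1 = true} = ENNReal.ofReal p
    rw [P18, Measure.map_apply (measurable_of_countable _) ((Set.toFinite _).measurableSet)]
    have : (fun z : Bool × Bool => ![z.1, z.1, z.2, z.2]) ⁻¹' {ω | ω 1 = true} =
        ({true} : Set Bool) ×ˢ (Set.univ : Set Bool) := by
      ext ⟨a, b⟩; cases a <;> cases b <;> simp [Set.mem_prod]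
    rw [this, Measure.prod_prod, bern_true hp, measure_univ, mul_one]
  · show P18 p {ω | ω 2 = true} = ENNReal.ofReal p
    rw [P18, Measure.map_apply (measurable_of_countable _) ((Set.toFinite _).measurableSet)]
    have : (fun z : Bool × Bool => ![z.1, z.1, z.2, z.2]) ⁻¹' {ω | ω 2 = true} =
        (Set.univ : Set Bool) ×ˢ ({true} : Set Bool) := by
      ext ⟨a, b⟩; cases a <;> cases b <;> simp [Set.mem_prod]
    rw [this, Measure.prod_prod, bern_true hp, measure_univ, one_mul]
  · show P18 p {ω | ω 3 = true} = ENNReal.ofReal p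
    rw [P18, Measure.map_apply (measurable_of_countable _) ((Set.toFinite _).measurableSet)]
    have : (fun z : Bool × Bool => ![z.1, z.1, z.2, z.2]) ⁻¹' {ω | ω 3 = true} =
        (Set.univ : Set Bool) ×ˢ ({true} : Set Bool) := by
      ext ⟨a, b⟩; cases a <;> cases b <;> simp [Set.mem_prod]
    rw [this, Measure.prod_prod, bern_true hp, measure_univ, one_mul]

lemma Q18_A18 (hp : p ∈ Set.Icc (0:ℝ) 1) : Q18 p A18 = ENNReal.ofReal (2 * p ^ 3 - p ^ 5) := by
  have hm : MeasurableSet A18 := (Set.toFinite _).measurableSet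
  set π : Measure (Fin 4 → Bool) := Measure.pi fun _ : Fin 4 => bern p with hπ
  set E1 : Set (Fin 4 → Bool) := Set.pi Set.univ ![{true}, Set.univ, {true}, Set.univ]
    with hE1def
  set E2 : Set (Fin 4 → Bool) := Set.pi Set.univ ![Set.univ, {true}, Set.univ, {true}]
    with hE2def
  have hU : A18 = E1 ∪ E2 := by
    ext ω
    constructor
    · rintro (⟨h0, h2⟩ | ⟨h1, h3⟩)
      · left; intro j _; fin_cases j <;> simp [h0, h2]
      · right; intro j _; fin_cases j <;> simp [h1, h3]
    · rintro (h | h)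
      · exact Or.inl ⟨by simpa using h 0 trivial, by simpa using h 2 trivial⟩
      · exact Or.inr ⟨by simpa using h 1 trivial, by simpa using h 3 trivial⟩
  have hE1 : π E1 = ENNReal.ofReal p * ENNReal.ofReal p := by
    rw [hE1def, Measure.pi_pi, Fin.prod_univ_four]
    simp [bern_true hp, bern_univ', measure_univ]
  have hE2 : π E2 = ENNReal.ofReal p * ENNReal.ofReal p := by
    rw [hE2def, Measure.pi_pi, Fin.prod_univ_four]
    simp [bern_true hp, bern_univ', measure_univ]
  have hE12 : π (E1 ∩ E2) = ENNReal.ofReal (p ^ 4) := by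
    rw [hE1def, hE2def, ← Set.pi_inter_distrib, Measure.pi_pi, Fin.prod_univ_four]
    simp only [Matrix.cons_val_zero, Matrix.cons_val_one, Matrix.head_cons,
      Matrix.cons_val_two, Matrix.cons_val_three, Matrix.tail_cons,
      Set.inter_univ, Set.univ_inter]
    rw [bern_true hp, ← ENNReal.ofReal_mul hp.1,
      ← ENNReal.ofReal_mul (mul_nonneg hp.1 hp.1),
      ← ENNReal.ofReal_mul (mul_nonneg (mul_nonneg hp.1 hp.1) hp.1)]
    congr 1; ring
  have key : π (E1 ∪ E2) + π (E1 ∩ E2) = π E1 + π E2 :=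
    measure_union_add_inter E1 ((Set.toFinite E2).measurableSet)
  have hπA : π A18 = ENNReal.ofReal (2 * p ^ 2 - p ^ 4) := by
    rw [hU]
    have h2p : π E1 + π E2 = ENNReal.ofReal (2 * p ^ 2) := by
      rw [hE1, hE2, ← ENNReal.ofReal_mul hp.1, ← ENNReal.ofReal_add (by nlinarith) (by nlinarith)]
      congr 1; ring
    have := ENNReal.eq_sub_of_add_eq (by rw [hE12]; exact ENNReal.ofReal_ne_top)
      (key.trans h2p)
    rw [this, hE12, ← ENNReal.ofReal_sub _ (by positivity)]
  rw [Q18, Measure.map_apply (measurable_of_countable _) hm]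
  have hpre : (fun (z : Bool × (Fin 4 → Bool)) (j : Fin 4) => z.1 && z.2 j) ⁻¹' A18 =
      ({true} : Set Bool) ×ˢ A18 := by
    ext ⟨a, ω⟩; cases a <;> simp [A18, Set.mem_prod]
  rw [hpre, Measure.prod_prod, bern_true hp, ← hπ, hπA, ← ENNReal.ofReal_mul hp.1]
  congr 1; ring

end computations

lemma ineq18 (q : ℝ) (hq : q ∈ Set.Ioo ((Real.sqrt 5 - 1) / 2) 1) :
    q ^ 2 < 2 * q ^ 3 - q ^ 5 := by
  obtain ⟨hq1, hq2⟩ := hq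
  have h5 : Real.sqrt 5 ^ 2 = 5 := Real.sq_sqrt (by norm_num)
  have hs : 0 ≤ Real.sqrt 5 := Real.sqrt_nonneg 5
  have h5' : 1 < Real.sqrt 5 := by nlinarith
  have hq0 : 0 < q := by nlinarith
  have hkey : 0 < q ^ 2 + q - 1 := by nlinarith [sq_nonneg (2 * q + 1 - Real.sqrt 5)]
  nlinarith [mul_pos (mul_pos (pow_pos hq0 2) (sub_pos.2 hq2)) hkey]


end PercFormal

/-- The model `P` is positively associated with marginals `p` and
`P[A] = p²`, while `Q[A] = 2p³ − p⁵`; since `2q³ − q⁵ > q²` for `q ∈ ((√5−1)/2, 1)`,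
for such `p` we get `P[A] < Q[A]`, so `P` is not stochastically larger than `Q`. -/
theorem counterexample_outdegree_four
    (p : ℝ) (hp : p ∈ Set.Icc (0 : ℝ) 1) :
    PercFormal.PositivelyAssociated (PercFormal.P18 p) ∧
    (∀ j : Fin 4, PercFormal.P18 p {ω | ω j = true} = ENNReal.ofReal p) ∧
    PercFormal.P18 p PercFormal.A18 = ENNReal.ofReal (p ^ 2) ∧
    PercFormal.Q18 p PercFormal.A18 = ENNReal.ofReal (2 * p ^ 3 - p ^ 5) ∧
    (∀ q : ℝ, q ∈ Set.Ioo ((Real.sqrt 5 - 1) / 2) 1 → q ^ 2 < 2 * q ^ 3 - q ^ 5) ∧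
    (p ∈ Set.Ioo ((Real.sqrt 5 - 1) / 2) 1 →
      PercFormal.P18 p PercFormal.A18 < PercFormal.Q18 p PercFormal.A18) := by
  refine ⟨?_, fun j => PercFormal.P18_marg hp j, PercFormal.P18_A18 hp,
    PercFormal.Q18_A18 hp, PercFormal.ineq18, ?_⟩
  · intro A B hA hB hAi hBi
    rw [PercFormal.P18, Measure.map_apply (measurable_of_countable _) hA,
      Measure.map_apply (measurable_of_countable _) hB,
      Measure.map_apply (measurable_of_countable _) (hA.inter hB), Set.preimage_inter]
    exact PercFormal.fkg2 p _ _ (PercFormal.pull_incr hAi) (PercFormal.pull_incr hBi)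
  · intro hpi
    rw [PercFormal.P18_A18 hp, PercFormal.Q18_A18 hp]
    have h := PercFormal.ineq18 p hpi
    have hpos : 0 < 2 * p ^ 3 - p ^ 5 := lt_of_le_of_lt (sq_nonneg p) h
    exact (ENNReal.ofReal_lt_ofReal_iff hpos).mpr h
end
end
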